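/- The class of (L0, L1)-smooth functions of one variable is not closed under summation: the functions f1(w) = ∫₀^w (u + sin(u²)) du and f2(w) = ∫₀^w (−v + sin(v²)) dv each satisfy |f''(w)| ≤ 3 + 3|f'(w)| for all w ∈ ℝ, but their sum f(w) = 2 sin(w²) admits no constants L0, L1 ≥ 0 with |f''(w)| ≤ L0 + L1|f'(w)| for all w. -/

import Mathlib

open Real

lemma hd_sin_sq (w : ℝ) : HasDerivAt (fun w : ℝ => Real.sin (w ^ 2)) (Real.cos (w ^ 2) * (2 * w)) w := by
  have h1 : HasDerivAt (fun w : ℝ => w ^ 2) (2 * w) w := by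
    simpa using hasDerivAt_pow 2 w
  exact (Real.hasDerivAt_sin (w ^ 2)).comp w h1

lemma bound_aux (w c s : ℝ) (hc : |c| ≤ 1) (hs : |s| ≤ 1) (e : ℝ) (he : |e| = 1) :
    |e + c * (2 * w)| ≤ 3 + 3 * |e * w + s| := by
  have h1 : |e + c * (2 * w)| ≤ 1 + 2 * |w| := by
    calc |e + c * (2 * w)| ≤ |e| + |c * (2 * w)| := abs_add_le _ _
    _ ≤ 1 + 2 * |w| := by
        rw [abs_mul, abs_mul, he]
        have : |c| * (|(2:ℝ)| * |w|) ≤ 1 * (2 * |w|) := by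
          apply mul_le_mul hc (by simp) (by positivity) (by norm_num)
        simp at this ⊢; nlinarith [abs_nonneg w]
  have h2 : |w| - 1 ≤ |e * w + s| := by
    have := abs_sub_abs_le_abs_sub (e * w) (-s)
    simp only [abs_neg, sub_neg_eq_add, abs_mul, he, one_mul] at this
    linarith [abs_le.mp hs |>.2, this, neg_abs_le s, abs_abs s]
  rcases le_total |w| 1 with h | h
  · nlinarith [abs_nonneg (e * w + s)]
  · nlinarith [abs_nonneg (e * w + s)]

/-- The class of `(L0,L1)`-smooth functions of one variable is not closed under summation. -/
theorem stmt_3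
    (f1 f2 : ℝ → ℝ)
    (hf1 : ∀ w, f1 w = ∫ u in (0:ℝ)..w, (u + Real.sin (u ^ 2)))
    (hf2 : ∀ w, f2 w = ∫ v in (0:ℝ)..w, (-v + Real.sin (v ^ 2))) :
    (∀ w, |deriv (deriv f1) w| ≤ 3 + 3 * |deriv f1 w|) ∧
    (∀ w, |deriv (deriv f2) w| ≤ 3 + 3 * |deriv f2 w|) ∧
    ¬ ∃ L0 L1 : ℝ, 0 ≤ L0 ∧ 0 ≤ L1 ∧
      ∀ w, |deriv (deriv (fun w => f1 w + f2 w)) w| ≤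
        L0 + L1 * |deriv (fun w => f1 w + f2 w) w| := by
  have hF1 : f1 = fun w => ∫ u in (0:ℝ)..w, (u + Real.sin (u ^ 2)) := funext hf1
  have hF2 : f2 = fun w => ∫ v in (0:ℝ)..w, (-v + Real.sin (v ^ 2)) := funext hf2
  subst hF1 hF2
  have cont1 : Continuous (fun u : ℝ => u + Real.sin (u ^ 2)) := by continuity
  have cont2 : Continuous (fun v : ℝ => -v + Real.sin (v ^ 2)) := by continuity
  have d1 : deriv (fun w => ∫ u in (0:ℝ)..w, (u + Real.sin (u ^ 2)))
      = fun w => w + Real.sin (w ^ 2) :=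
    funext fun w => cont1.deriv_integral _ 0 w
  have d2 : deriv (fun w => ∫ v in (0:ℝ)..w, (-v + Real.sin (v ^ 2)))
      = fun w => -w + Real.sin (w ^ 2) :=
    funext fun w => cont2.deriv_integral _ 0 w
  refine ⟨?_, ?_, ?_⟩
  · intro w
    rw [d1]
    have hdd : HasDerivAt (fun w : ℝ => w + Real.sin (w ^ 2))
        (1 + Real.cos (w ^ 2) * (2 * w)) w := (hasDerivAt_id w).add (hd_sin_sq w)
    rw [hdd.deriv]
    simpa using bound_aux w (Real.cos (w ^ 2)) (Real.sin (w ^ 2))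
      (Real.abs_cos_le_one _) (Real.abs_sin_le_one _) 1 (by norm_num)
  · intro w
    rw [d2]
    have hdd : HasDerivAt (fun w : ℝ => -w + Real.sin (w ^ 2))
        (-1 + Real.cos (w ^ 2) * (2 * w)) w := ((hasDerivAt_id w).neg).add (hd_sin_sq w)
    rw [hdd.deriv]
    have := bound_aux w (Real.cos (w ^ 2)) (Real.sin (w ^ 2))
      (Real.abs_cos_le_one _) (Real.abs_sin_le_one _) (-1) (by norm_num)
    simpa [neg_mul, neg_add_eq_sub, sub_eq_add_neg] using this
  · rintro ⟨L0, L1, hL0, hL1, h⟩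
    have dS : deriv (fun w => (∫ u in (0:ℝ)..w, (u + Real.sin (u ^ 2)))
        + (∫ v in (0:ℝ)..w, (-v + Real.sin (v ^ 2)))) = fun w => 2 * Real.sin (w ^ 2) := by
      funext w
      have h1 := (cont1.integral_hasStrictDerivAt 0 w).hasDerivAt
      have h2 := (cont2.integral_hasStrictDerivAt 0 w).hasDerivAt
      rw [(h1.fun_add h2).deriv]; ring
    obtain ⟨n, hn⟩ := exists_nat_gt (L0 ^ 2)
    set w := Real.sqrt (n * π) with hw
    have hw0 : 0 ≤ w := Real.sqrt_nonneg _
    have hw2 : w ^ 2 = n * π := Real.sq_sqrt (by positivity)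
    have hsin : Real.sin (w ^ 2) = 0 := by rw [hw2]; exact Real.sin_nat_mul_pi n
    have hcos : |Real.cos (w ^ 2)| = 1 := by
      have h3 := Real.sin_sq_add_cos_sq (w ^ 2)
      rw [hsin] at h3
      have hc2 : Real.cos (w ^ 2) * Real.cos (w ^ 2) = 1 := by nlinarith
      rcases mul_self_eq_one_iff.mp hc2 with hc | hc <;> rw [hc] <;> norm_num
    have hspec := h w
    rw [dS] at hspec
    have hdd : HasDerivAt (fun w : ℝ => 2 * Real.sin (w ^ 2))
        (2 * (Real.cos (w ^ 2) * (2 * w))) w := (hd_sin_sq w).const_mul 2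
    rw [hdd.deriv] at hspec
    simp only [hsin, mul_zero, abs_zero, add_zero] at hspec
    have hval : |2 * (Real.cos (w ^ 2) * (2 * w))| = 4 * w := by
      rw [abs_mul, abs_mul, hcos, abs_mul]
      simp [abs_of_nonneg hw0]; ring
    rw [hval] at hspec
    -- hspec : 4 * w ≤ L0 + L1 * 0
    have h16 : 16 * (w ^ 2) = 16 * (n * π) := by rw [hw2]
    nlinarith [Real.pi_gt_three, hspec, hn, hw0, sq_nonneg w]
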